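/- Let (X,T) be an invertible dynamical system with X a compact metric space. Then (X,T) satisfies the multiple IP-recurrence property if and only if for every m ∈ ℕ, every sequence s : ℕ → ℤ^m, and every nonempty open subset U of X, there exist a point x ∈ U and a homomorphism φ : 𝒫_f(ℕ) → 𝒫_f(ℕ) such that for each i ∈ {1,…,m}, T^{s_{φ(α)}(i)} x → x as a 𝒫_f(ℕ)-sequence, i.e., for every neighborhood V of x there exists k ∈ ℕ such that T^{s_{φ(α)}(i)} x ∈ V whenever α ∈ 𝒫_f(ℕ) satisfies min α > k. -/

import Mathlib

open Finset

/-- A homomorphism `φ : 𝒫_f(ℕ₊) → 𝒫_f(ℕ₊)`: it maps nonempty finite sets to nonempty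
finite sets, disjoint sets to disjoint sets, and commutes with unions. -/
def IsPfHom (φ : Finset ℕ+ → Finset ℕ+) : Prop :=
  (∀ α : Finset ℕ+, α.Nonempty → (φ α).Nonempty) ∧
  (∀ α β : Finset ℕ+, α.Nonempty → β.Nonempty → Disjoint α β → Disjoint (φ α) (φ β)) ∧
  (∀ α β : Finset ℕ+, α.Nonempty → β.Nonempty → φ (α ∪ β) = φ α ∪ φ β)

/-- An invertible system `(X, T)` satisfies the multiple IP-recurrence property:
for every `m ∈ ℕ`, every sequence `s : ℕ₊ → ℤ^m` and every nonempty open `U ⊆ X`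
there exists a nonempty finite `α` with `⋂ i, T^(-s_α i) U ≠ ∅`. -/
def MultipleIPRecurrence {X : Type*} [TopologicalSpace X] (T : X ≃ₜ X) : Prop :=
  ∀ (m : ℕ) (s : ℕ+ → Fin m → ℤ) (U : Set X), IsOpen U → U.Nonempty →
    ∃ α : Finset ℕ+, α.Nonempty ∧
      (⋂ i : Fin m, (fun z => (T.toEquiv ^ (∑ n ∈ α, s n i)) z) ⁻¹' U).Nonempty

lemma contPow {X : Type*} [TopologicalSpace X] (T : X ≃ₜ X) (k : ℤ) :
    Continuous fun z : X => (T.toEquiv ^ k) z := by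
  induction k using Int.induction_on with
  | zero => simpa using continuous_id'
  | succ n ih =>
      have h : (T.toEquiv ^ ((n : ℤ) + 1)) = T.toEquiv ^ (n : ℤ) * T.toEquiv :=
        zpow_add_one T.toEquiv n
      simp only [h, Equiv.Perm.mul_apply]
      exact ih.comp T.continuous
  | pred n ih =>
      have h : (T.toEquiv ^ (-(n : ℤ) - 1)) = T.toEquiv ^ (-(n : ℤ)) * T.toEquiv⁻¹ :=
        zpow_sub_one T.toEquiv (-n)
      have h2 : ∀ z : X, (T.toEquiv⁻¹) z = T.symm z := fun z => rfl
      simp only [h, Equiv.Perm.mul_apply, h2]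
      exact ih.comp T.symm.continuous

/-- The basic step: inside any nonempty open `V` we can find a small open ball `W`
whose closure is sent into `V` by all the maps `T^(s_a i)`, for a block `a` of
indices beyond any prescribed bound `N`. -/
lemma keyStep {X : Type*} [MetricSpace X] (T : X ≃ₜ X) (hrec : MultipleIPRecurrence T)
    (m : ℕ) (s : ℕ+ → Fin m → ℤ) (V : Set X) (N : ℕ) (hVo : IsOpen V) (hVne : V.Nonempty)
    (ε : ℝ) (hε : 0 < ε) :
    ∃ (a : Finset ℕ+) (W : Set X), a.Nonempty ∧ (∀ n ∈ a, N < (n : ℕ)) ∧ IsOpen W ∧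
      W.Nonempty ∧ closure W ⊆ V ∧ Metric.diam W ≤ ε ∧
      ∀ i, closure W ⊆ (fun z => (T.toEquiv ^ (∑ n ∈ a, s n i)) z) ⁻¹' V := by
  set Np : ℕ+ := ⟨N + 1, Nat.succ_pos N⟩ with hNp
  set s' : ℕ+ → Fin (m + 1) → ℤ := fun n => Fin.cons 0 (fun i => s (n + Np) i) with hs'
  obtain ⟨α, hαne, hint⟩ := hrec (m + 1) s' V hVo hVne
  obtain ⟨z, hz⟩ := hint
  have hinj : Function.Injective (fun b : ℕ+ => b + Np) := by
    intro a b h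
    have : (a : ℕ) + (Np : ℕ) = (b : ℕ) + (Np : ℕ) := by
      have := congrArg (fun x : ℕ+ => (x : ℕ)) h
      simpa [PNat.add_coe] using this
    exact PNat.coe_injective (Nat.add_right_cancel this)
  set a : Finset ℕ+ := α.image (fun b => b + Np) with ha
  have hane : a.Nonempty := hαne.image _
  have hagt : ∀ n ∈ a, N < (n : ℕ) := by
    intro n hn
    obtain ⟨b, hb, rfl⟩ := Finset.mem_image.mp hn
    have : (N : ℕ) + 1 ≤ (b : ℕ) + (N + 1) := by omega
    rw [PNat.add_coe]
    exact Nat.lt_of_lt_of_le (Nat.lt_succ_self N) this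
  have hsum : ∀ i : Fin m, ∑ n ∈ a, s n i = ∑ b ∈ α, s' b i.succ := by
    intro i
    rw [ha, Finset.sum_image (fun x _ y _ h => hinj h)]
    refine Finset.sum_congr rfl fun b _ => ?_
    simp [hs']
  have hzmem : ∀ i : Fin (m + 1), (T.toEquiv ^ (∑ n ∈ α, s' n i)) z ∈ V :=
    fun i => Set.mem_iInter.mp hz i
  have hzV : z ∈ V := by
    have := hzmem 0
    simpa [hs'] using this
  set Z : Set X := V ∩ ⋂ i : Fin m, (fun w => (T.toEquiv ^ (∑ n ∈ a, s n i)) w) ⁻¹' V with hZ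
  have hZo : IsOpen Z := by
    refine hVo.inter (isOpen_iInter_of_finite fun i => ?_)
    exact (contPow T _).isOpen_preimage _ hVo
  have hzZ : z ∈ Z := by
    refine ⟨hzV, Set.mem_iInter.mpr fun i => ?_⟩
    have := hzmem i.succ
    simpa [hsum i] using this
  obtain ⟨r, hr, hball⟩ := Metric.isOpen_iff.mp hZo z hzZ
  set ρ : ℝ := min (r / 2) (ε / 3) with hρ
  have hρpos : 0 < ρ := lt_min (by linarith) (by linarith)
  have hclosure : closure (Metric.ball z ρ) ⊆ Z := by
    intro w hw
    have hw' : dist w z ≤ ρ := Metric.closure_ball_subset_closedBall hw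
    exact hball (lt_of_le_of_lt hw' (lt_of_le_of_lt (min_le_left _ _) (by linarith)))
  refine ⟨a, Metric.ball z ρ, hane, hagt, Metric.isOpen_ball, ⟨z, Metric.mem_ball_self hρpos⟩,
    fun w hw => (hclosure hw).1, ?_, fun i w hw => Set.mem_iInter.mp (hclosure hw).2 i⟩
  calc Metric.diam (Metric.ball z ρ) ≤ 2 * ρ := Metric.diam_ball hρpos.le
    _ ≤ 2 * (ε / 3) := by have := min_le_right (r / 2) (ε / 3); linarith
    _ ≤ ε := by linarith

/-- For an invertible system on a compact metric space, the multiple IP-recurrence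
property holds iff for every `m`, every sequence `s : ℕ₊ → ℤ^m` and every nonempty open
`U` there are `x ∈ U` and a homomorphism `φ : 𝒫_f(ℕ₊) → 𝒫_f(ℕ₊)` such that for each
`i`, `T^(s_(φ α) i) x → x` as a `𝒫_f(ℕ₊)`-sequence. -/
theorem multiple_ip_recurrence_iff_ip_limit
    {X : Type*} [MetricSpace X] [CompactSpace X] [Nonempty X] (T : X ≃ₜ X) :
    MultipleIPRecurrence T ↔
      ∀ (m : ℕ) (s : ℕ+ → Fin m → ℤ) (U : Set X), IsOpen U → U.Nonempty →
        ∃ x ∈ U, ∃ φ : Finset ℕ+ → Finset ℕ+, IsPfHom φ ∧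
          ∀ i : Fin m, ∀ V : Set X, IsOpen V → x ∈ V →
            ∃ k : ℕ+, ∀ α : Finset ℕ+, α.Nonempty → (∀ a ∈ α, k < a) →
              (T.toEquiv ^ (∑ n ∈ φ α, s n i)) x ∈ V := by
  constructor
  · -- forward direction
    intro hrec m s U hUo hUne
    obtain ⟨a0, W0, _, _, hW0o, hW0ne, hW0cl, hW0diam, _⟩ :=
      keyStep T hrec m s U 0 hUo hUne 1 one_pos
    -- the recursive construction
    set Rel : ℕ → (Set X × Finset ℕ+ × Finset ℕ+) → (Set X × Finset ℕ+ × Finset ℕ+) → Prop :=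
      fun j p q => (IsOpen p.1 ∧ p.1.Nonempty) →
        (q.2.1.Nonempty ∧ (∀ n ∈ q.2.1, ∀ b ∈ p.2.2, b < n) ∧ IsOpen q.1 ∧ q.1.Nonempty ∧
          closure q.1 ⊆ p.1 ∧ Metric.diam q.1 ≤ (1 / 2) ^ (j + 1) ∧
          (∀ i, closure q.1 ⊆ (fun z => (T.toEquiv ^ (∑ n ∈ q.2.1, s n i)) z) ⁻¹' p.1) ∧
          q.2.2 = p.2.2 ∪ q.2.1) with hRelDef
    have hstep : ∀ j p, ∃ q, Rel j p q := by
      intro j p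
      by_cases h : IsOpen p.1 ∧ p.1.Nonempty
      · obtain ⟨a, W, hane, hagt, hWo, hWne, hWcl, hWd, hWpre⟩ :=
          keyStep T hrec m s p.1 (p.2.2.sup (fun n => (n : ℕ))) h.1 h.2 ((1 / 2) ^ (j + 1))
            (by positivity)
        refine ⟨(W, a, p.2.2 ∪ a), fun _ => ⟨hane, ?_, hWo, hWne, hWcl, hWd, hWpre, rfl⟩⟩
        intro n hn b hb
        have h1 : (b : ℕ) ≤ p.2.2.sup (fun n => (n : ℕ)) := Finset.le_sup hb
        have h2 := hagt n hn
        exact (PNat.coe_lt_coe _ _).mp (by omega)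
      · exact ⟨p, fun hc => absurd hc h⟩
    set F : ℕ → Set X × Finset ℕ+ × Finset ℕ+ :=
      fun n => Nat.rec (W0, (∅ : Finset ℕ+), (∅ : Finset ℕ+))
        (fun j p => (hstep j p).choose) n with hFdef
    have hInv : ∀ j, IsOpen (F j).1 ∧ (F j).1.Nonempty := by
      intro j
      induction j with
      | zero => exact ⟨hW0o, hW0ne⟩
      | succ j ih =>
          have h := (hstep j (F j)).choose_spec ih
          exact ⟨h.2.2.1, h.2.2.2.1⟩
    have hRel : ∀ j, (F (j + 1)).2.1.Nonempty ∧
        (∀ n ∈ (F (j + 1)).2.1, ∀ b ∈ (F j).2.2, b < n) ∧ IsOpen (F (j + 1)).1 ∧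
        (F (j + 1)).1.Nonempty ∧ closure (F (j + 1)).1 ⊆ (F j).1 ∧
        Metric.diam (F (j + 1)).1 ≤ (1 / 2) ^ (j + 1) ∧
        (∀ i, closure (F (j + 1)).1 ⊆
          (fun z => (T.toEquiv ^ (∑ n ∈ (F (j + 1)).2.1, s n i)) z) ⁻¹' (F j).1) ∧
        (F (j + 1)).2.2 = (F j).2.2 ∪ (F (j + 1)).2.1 :=
      fun j => (hstep j (F j)).choose_spec (hInv j)
    set Vs : ℕ → Set X := fun j => (F j).1 with hVsdef
    set A : ℕ → Finset ℕ+ := fun j => (F j).2.1 with hAdef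
    set used : ℕ → Finset ℕ+ := fun j => (F j).2.2 with husedDef
    have hAne : ∀ j, (A (j + 1)).Nonempty := fun j => (hRel j).1
    have hAgt : ∀ j, ∀ n ∈ A (j + 1), ∀ b ∈ used j, b < n := fun j => (hRel j).2.1
    have hcl : ∀ j, closure (Vs (j + 1)) ⊆ Vs j := fun j => (hRel j).2.2.2.2.1
    have hdiam : ∀ j, Metric.diam (Vs j) ≤ (1 / 2) ^ j := by
      intro j
      cases j with
      | zero => rw [pow_zero]; exact hW0diam
      | succ j => exact (hRel j).2.2.2.2.2.1
    have hpre : ∀ j i, closure (Vs (j + 1)) ⊆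
        (fun z => (T.toEquiv ^ (∑ n ∈ A (j + 1), s n i)) z) ⁻¹' (Vs j) :=
      fun j => (hRel j).2.2.2.2.2.2.1
    have husedsucc : ∀ j, used (j + 1) = used j ∪ A (j + 1) := fun j => (hRel j).2.2.2.2.2.2.2
    have hVne : ∀ j, (Vs j).Nonempty := fun j => (hInv j).2
    have hVs0 : Vs 0 = W0 := rfl
    clear_value Vs A used F Rel
    clear hRel hInv hstep hRelDef hFdef hVsdef hAdef husedDef Rel F
    have hAsub : ∀ j, A (j + 1) ⊆ used (j + 1) := by
      intro j; rw [husedsucc j]; exact Finset.subset_union_right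
    have husedmono : ∀ j l, l ≤ j → used l ⊆ used j := by
      intro j
      induction j with
      | zero => intro l hl; rw [Nat.le_zero.mp hl]
      | succ j ih =>
          intro l hl
          by_cases hl' : l ≤ j
          · exact (ih l hl').trans (by rw [husedsucc j]; exact Finset.subset_union_left)
          · have : l = j + 1 := by omega
            rw [this]
    -- blocks are strictly ordered
    have hblocks : ∀ l j : ℕ, 1 ≤ l → l < j → ∀ b ∈ A l, ∀ n ∈ A j, b < n := by
      intro l j hl hlj b hb n hn
      obtain ⟨j', rfl⟩ : ∃ j', j = j' + 1 := ⟨j - 1, by omega⟩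
      obtain ⟨l', rfl⟩ : ∃ l', l = l' + 1 := ⟨l - 1, by omega⟩
      have hbu : b ∈ used j' := husedmono j' (l' + 1) (by omega) (hAsub l' hb)
      exact hAgt j' n hn b hbu
    have hAdisj : ∀ j j' : ℕ+, j ≠ j' → Disjoint (A (j : ℕ)) (A (j' : ℕ)) := by
      intro j j' hne
      rw [Finset.disjoint_left]
      intro b hb hb'
      rcases lt_or_gt_of_ne hne with h | h
      · exact absurd (hblocks (j : ℕ) (j' : ℕ) j.one_le ((PNat.coe_lt_coe _ _).mpr h) b hb b hb')
          (lt_irrefl b)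
      · exact absurd (hblocks (j' : ℕ) (j : ℕ) j'.one_le ((PNat.coe_lt_coe _ _).mpr h) b hb' b hb)
          (lt_irrefl b)
    -- nesting
    have hVmono : ∀ u t : ℕ, t ≤ u → Vs u ⊆ Vs t := by
      intro u
      induction u with
      | zero => intro t ht; rw [Nat.le_zero.mp ht]
      | succ u ih =>
          intro t ht
          by_cases ht' : t ≤ u
          · exact (subset_closure.trans (hcl u)).trans (ih t ht')
          · have : t = u + 1 := by omega
            rw [this]
    -- the point x
    have hcompact : (⋂ j, closure (Vs j)).Nonempty := by
      apply IsCompact.nonempty_iInter_of_sequence_nonempty_isCompact_isClosed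
      · intro j
        exact (hcl j).trans subset_closure
      · intro j
        exact (hVne j).closure
      · exact isClosed_closure.isCompact
      · intro j; exact isClosed_closure
    obtain ⟨x, hx⟩ := hcompact
    have hxcl : ∀ j, x ∈ closure (Vs j) := fun j => Set.mem_iInter.mp hx j
    have hxU : x ∈ U := hW0cl (by rw [← hVs0]; exact hxcl 0)
    -- the homomorphism
    set φ : Finset ℕ+ → Finset ℕ+ := fun β => β.biUnion (fun j => A (j : ℕ)) with hφdef
    have hφne : ∀ β : Finset ℕ+, β.Nonempty → (φ β).Nonempty := by
      intro β ⟨j, hj⟩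
      obtain ⟨j', hj'⟩ : ∃ j', (j : ℕ) = j' + 1 := ⟨(j : ℕ) - 1, by have := j.pos; omega⟩
      obtain ⟨n, hn⟩ := hAne j'
      exact ⟨n, Finset.mem_biUnion.mpr ⟨j, hj, by rw [hj']; exact hn⟩⟩
    have hPf : IsPfHom φ := by
      refine ⟨hφne, ?_, ?_⟩
      · intro β γ _ _ hd
        rw [Finset.disjoint_left]
        intro n hn hn'
        obtain ⟨j, hj, hnj⟩ := Finset.mem_biUnion.mp hn
        obtain ⟨j', hj', hnj'⟩ := Finset.mem_biUnion.mp hn'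
        have hne : j ≠ j' := fun h => (Finset.disjoint_left.mp hd hj) (h ▸ hj')
        exact (Finset.disjoint_left.mp (hAdisj j j' hne) hnj) hnj'
      · intro β γ _ _
        ext n
        simp only [hφdef, Finset.mem_biUnion, Finset.mem_union]
        constructor
        · rintro ⟨j, hj | hj, hn⟩
          · exact Or.inl ⟨j, hj, hn⟩
          · exact Or.inr ⟨j, hj, hn⟩
        · rintro (⟨j, hj, hn⟩ | ⟨j, hj, hn⟩)
          · exact ⟨j, Or.inl hj, hn⟩
          · exact ⟨j, Or.inr hj, hn⟩
    refine ⟨x, hxU, φ, hPf, ?_⟩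
    -- the chain lemma
    have chain : ∀ β : Finset ℕ+, ∀ hβ : β.Nonempty, ∀ i : Fin m, ∀ y,
        y ∈ closure (Vs ((β.max' hβ : ℕ))) →
        (T.toEquiv ^ (∑ j ∈ β, ∑ n ∈ A (j : ℕ), s n i)) y ∈ Vs ((β.min' hβ : ℕ) - 1) := by
      intro β
      induction β using Finset.strongInduction with
      | _ β ih =>
        intro hβ i y hy
        set M := β.max' hβ with hM
        have hMβ : M ∈ β := β.max'_mem hβ
        set c : ℕ+ → ℤ := fun j => ∑ n ∈ A (j : ℕ), s n i with hc
        have hMpred : ((M : ℕ) - 1) + 1 = (M : ℕ) := Nat.succ_pred_eq_of_pos M.pos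
        have hy1 : (T.toEquiv ^ c M) y ∈ Vs ((M : ℕ) - 1) := by
          have h := hpre ((M : ℕ) - 1) i
          rw [hMpred] at h
          exact h hy
        have hsplit : ∑ j ∈ β, c j = ∑ j ∈ β.erase M, c j + c M :=
          (Finset.sum_erase_add β c hMβ).symm
        have happ : (T.toEquiv ^ (∑ j ∈ β, c j)) y
            = (T.toEquiv ^ (∑ j ∈ β.erase M, c j)) ((T.toEquiv ^ c M) y) := by
          rw [hsplit, zpow_add, Equiv.Perm.mul_apply]
        by_cases hE : (β.erase M).Nonempty
        · set M' := (β.erase M).max' hE with hM'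
          have hM'mem : M' ∈ β.erase M := (β.erase M).max'_mem hE
          have hM'lt : M' < M :=
            lt_of_le_of_ne (β.le_max' M' (Finset.mem_of_mem_erase hM'mem))
              (Finset.ne_of_mem_erase hM'mem)
          have hle : (M' : ℕ) ≤ (M : ℕ) - 1 := by
            have := (PNat.coe_lt_coe M' M).mpr hM'lt; omega
          have hy1' : (T.toEquiv ^ c M) y ∈ closure (Vs ((M' : ℕ))) :=
            subset_closure (hVmono ((M : ℕ) - 1) (M' : ℕ) hle hy1)
          have ihr := ih (β.erase M) (Finset.erase_ssubset hMβ) hE i _ hy1'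
          have hminmem : β.min' hβ ∈ β.erase M := by
            refine Finset.mem_erase.mpr ⟨?_, β.min'_mem hβ⟩
            have h1 : β.min' hβ ≤ M' := β.min'_le M' (Finset.mem_of_mem_erase hM'mem)
            exact ne_of_lt (lt_of_le_of_lt h1 hM'lt)
          have hmineq : (β.erase M).min' hE = β.min' hβ :=
            le_antisymm ((β.erase M).min'_le _ hminmem)
              (β.min'_le _ (Finset.mem_of_mem_erase ((β.erase M).min'_mem hE)))
          rw [happ, ← hmineq]
          exact ihr
        · have hempty : β.erase M = ∅ := Finset.not_nonempty_iff_eq_empty.mp hE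
          have hmineq : β.min' hβ = M := by
            by_contra h
            have : β.min' hβ ∈ β.erase M := Finset.mem_erase.mpr ⟨h, β.min'_mem hβ⟩
            simp [hempty] at this
          rw [happ, hempty]
          simpa [hmineq] using hy1
    -- the convergence statement
    intro i V hVop hxV
    obtain ⟨ε, hε, hball⟩ := Metric.isOpen_iff.mp hVop x hxV
    obtain ⟨t, ht⟩ : ∃ t : ℕ, (1 / 2 : ℝ) ^ t < ε :=
      exists_pow_lt_of_lt_one hε (by norm_num)
    refine ⟨⟨t + 1, Nat.succ_pos t⟩, ?_⟩
    intro β hβ hgt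
    have hsumeq : ∑ n ∈ φ β, s n i = ∑ j ∈ β, ∑ n ∈ A (j : ℕ), s n i := by
      refine Finset.sum_biUnion ?_
      intro j hj j' hj' hne
      exact hAdisj j j' hne
    have hz := chain β hβ i x (hxcl _)
    have hmin : t ≤ (β.min' hβ : ℕ) - 1 := by
      have h1 := hgt _ (β.min'_mem hβ)
      have h2 : (t + 1 : ℕ) < ((β.min' hβ : ℕ)) := (PNat.coe_lt_coe _ _).mpr h1
      omega
    have hzt : (T.toEquiv ^ (∑ j ∈ β, ∑ n ∈ A (j : ℕ), s n i)) x ∈ Vs t :=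
      hVmono _ t hmin hz
    have hbd : Bornology.IsBounded (closure (Vs t)) :=
      (isCompact_univ.isBounded).subset (Set.subset_univ _)
    have hdist : dist ((T.toEquiv ^ (∑ j ∈ β, ∑ n ∈ A (j : ℕ), s n i)) x) x
        ≤ Metric.diam (closure (Vs t)) :=
      Metric.dist_le_diam_of_mem hbd (subset_closure hzt) (hxcl t)
    rw [Metric.diam_closure] at hdist
    have : dist ((T.toEquiv ^ (∑ j ∈ β, ∑ n ∈ A (j : ℕ), s n i)) x) x < ε :=
      lt_of_le_of_lt (hdist.trans (hdiam t)) ht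
    rw [hsumeq]
    exact hball this
  · -- backward direction
    intro h m s U hUo hUne
    obtain ⟨x, hxU, φ, hPf, hlim⟩ := h m s U hUo hUne
    choose k hk using fun i : Fin m => hlim i U hUo hxU
    set K : ℕ+ := Finset.univ.sup k with hK
    set β : Finset ℕ+ := {K + 1} with hβ
    have hβne : β.Nonempty := ⟨K + 1, Finset.mem_singleton_self _⟩
    have hβgt : ∀ i : Fin m, ∀ a ∈ β, k i < a := by
      intro i a ha
      rw [hβ, Finset.mem_singleton] at ha
      subst ha
      have h1 : k i ≤ K := Finset.le_sup (Finset.mem_univ i)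
      have h2 : K < K + 1 := PNat.lt_add_right K 1
      exact lt_of_le_of_lt h1 h2
    refine ⟨φ β, hPf.1 β hβne, ⟨x, Set.mem_iInter.mpr fun i => ?_⟩⟩
    exact hk i β hβne (hβgt i)
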